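/- arXiv:1911.06511 — 4 statements merged into one kernel-verified Lean document; each statement's English description precedes it below -/
import Mathlib

section
/- Let G be a simple graph on a finite vertex set V and c : V → ℕ a coloring of V. Suppose i ≠ j are two colors such that every vertex of c⁻¹(i) is adjacent in G to every vertex of c⁻¹(j) (the edges between the two classes form a complete bipartite graph). Let G' be the graph obtained from G by deleting all edges with one endpoint in c⁻¹(i) and the other endpoint in c⁻¹(j). Then a permutation γ of V is a color-preserving automorphism of (G, c) if and only if it is a color-preserving automorphism of (G', c). -/
/-- Deleting the edges of a complete bipartite connection between two distinct
color classes does not change the color-preserving automorphism group. -/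
theorem stmt_1 {V : Type*} [Fintype V] (G G' : SimpleGraph V) (c : V → ℕ) (i j : ℕ)
    (hij : i ≠ j)
    (hbip : ∀ u v : V, c u = i → c v = j → G.Adj u v)
    (hG' : ∀ u v : V, G'.Adj u v ↔
      G.Adj u v ∧ ¬((c u = i ∧ c v = j) ∨ (c u = j ∧ c v = i)))
    (γ : Equiv.Perm V) :
    ((∀ u v : V, G.Adj (γ u) (γ v) ↔ G.Adj u v) ∧ (∀ v : V, c (γ v) = c v)) ↔
      ((∀ u v : V, G'.Adj (γ u) (γ v) ↔ G'.Adj u v) ∧ (∀ v : V, c (γ v) = c v)) := by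
  have key : ∀ u v : V, G.Adj u v ↔
      G'.Adj u v ∨ ((c u = i ∧ c v = j) ∨ (c u = j ∧ c v = i)) := by
    intro u v
    constructor
    · intro h
      by_cases hc : (c u = i ∧ c v = j) ∨ (c u = j ∧ c v = i)
      · exact Or.inr hc
      · exact Or.inl ((hG' u v).2 ⟨h, hc⟩)
    · rintro (h | ⟨h1, h2⟩ | ⟨h1, h2⟩)
      · exact ((hG' u v).1 h).1
      · exact hbip u v h1 h2
      · exact (hbip v u h2 h1).symm
  constructor
  · rintro ⟨hA, hc⟩
    refine ⟨fun u v => ?_, hc⟩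
    rw [hG', hG', hA, hc, hc]
  · rintro ⟨hA, hc⟩
    refine ⟨fun u v => ?_, hc⟩
    rw [key, key, hA, hc, hc]
end

section
/- Let G be a simple graph on a finite vertex set V and c : V → ℕ a coloring of V. Suppose the color class c⁻¹(i) induces a complete subgraph of G, and suppose i' ≠ j' are two colors such that every vertex of c⁻¹(i') is adjacent in G to every vertex of c⁻¹(j'). Let G' be the graph obtained from G by simultaneously deleting all edges with both endpoints in c⁻¹(i) and all edges with one endpoint in c⁻¹(i') and the other in c⁻¹(j'). Then the color-preserving automorphism group of (G', c) equals the color-preserving automorphism group of (G, c). -/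
/-- Simultaneously deleting the edges inside a complete color class and the
edges of a complete bipartite connection between two distinct color classes
yields a graph with the same color-preserving automorphism group. -/
theorem stmt_2 {V : Type*} [Fintype V] (G G' : SimpleGraph V) (c : V → ℕ) (i i' j' : ℕ)
    (hcomplete : ∀ u v : V, c u = i → c v = i → u ≠ v → G.Adj u v)
    (hij : i' ≠ j')
    (hbip : ∀ u v : V, c u = i' → c v = j' → G.Adj u v)
    (hG' : ∀ u v : V, G'.Adj u v ↔
      G.Adj u v ∧ ¬(c u = i ∧ c v = i) ∧
        ¬((c u = i' ∧ c v = j') ∨ (c u = j' ∧ c v = i'))) :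
    {γ : Equiv.Perm V |
        (∀ u v : V, G'.Adj (γ u) (γ v) ↔ G'.Adj u v) ∧ (∀ v : V, c (γ v) = c v)} =
      {γ : Equiv.Perm V |
        (∀ u v : V, G.Adj (γ u) (γ v) ↔ G.Adj u v) ∧ (∀ v : V, c (γ v) = c v)} := by
  -- P u v : the "deleted" condition, depending only on colors
  set P : V → V → Prop := fun u v => (c u = i ∧ c v = i) ∨
    ((c u = i' ∧ c v = j') ∨ (c u = j' ∧ c v = i')) with hP
  have hG'P : ∀ u v : V, G'.Adj u v ↔ G.Adj u v ∧ ¬ P u v := by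
    intro u v
    rw [hG' u v, hP]
    tauto
  have hGP : ∀ u v : V, G.Adj u v ↔ G'.Adj u v ∨ (u ≠ v ∧ P u v) := by
    intro u v
    constructor
    · intro h
      by_cases hp : P u v
      · exact Or.inr ⟨h.ne, hp⟩
      · exact Or.inl ((hG'P u v).2 ⟨h, hp⟩)
    · rintro (h | ⟨hne, hp⟩)
      · exact ((hG'P u v).1 h).1
      · rcases hp with ⟨h1, h2⟩ | ⟨h1, h2⟩ | ⟨h1, h2⟩
        · exact hcomplete u v h1 h2 hne
        · exact hbip u v h1 h2
        · exact (hbip v u h2 h1).symm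
  ext γ
  simp only [Set.mem_setOf_eq]
  constructor
  · rintro ⟨h1, h2⟩
    refine ⟨fun u v => ?_, h2⟩
    have hPγ : P (γ u) (γ v) ↔ P u v := by rw [hP]; simp [h2]
    rw [hGP, hGP u v, h1 u v, hPγ, γ.injective.ne_iff]
  · rintro ⟨h1, h2⟩
    refine ⟨fun u v => ?_, h2⟩
    have hPγ : P (γ u) (γ v) ↔ P u v := by rw [hP]; simp [h2]
    rw [hG'P, hG'P u v, h1 u v, hPγ]
end

section
/- Let G be a simple graph on a finite vertex set V and c : V → ℕ a coloring that is equitable with respect to G. Suppose i ≠ j are two colors such that every vertex of c⁻¹(i) is adjacent in G to every vertex of c⁻¹(j), and let G' be the graph obtained from G by deleting all edges with one endpoint in c⁻¹(i) and the other in c⁻¹(j). Then c is equitable with respect to G'. -/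
/-- Deleting the edges of a complete bipartite connection between two distinct
color classes preserves equitability of the coloring. -/
theorem stmt_4 {V : Type*} [Fintype V] (G G' : SimpleGraph V) (c : V → ℕ) (i j : ℕ)
    (hEq : ∀ u v : V, c u = c v → ∀ k : ℕ,
      {w : V | G.Adj u w ∧ c w = k}.ncard = {w : V | G.Adj v w ∧ c w = k}.ncard)
    (hij : i ≠ j)
    (hbip : ∀ u v : V, c u = i → c v = j → G.Adj u v)
    (hG' : ∀ u v : V, G'.Adj u v ↔
      G.Adj u v ∧ ¬((c u = i ∧ c v = j) ∨ (c u = j ∧ c v = i))) :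
    ∀ u v : V, c u = c v → ∀ k : ℕ,
      {w : V | G'.Adj u w ∧ c w = k}.ncard = {w : V | G'.Adj v w ∧ c w = k}.ncard := by
  intro u v huv k
  by_cases hdel : (c u = i ∧ k = j) ∨ (c u = j ∧ k = i)
  · -- both sets empty
    have empty : ∀ x : V, c x = c u → {w : V | G'.Adj x w ∧ c w = k} = ∅ := by
      intro x hx
      ext w
      simp only [Set.mem_setOf_eq, Set.mem_empty_iff_false, iff_false]
      rintro ⟨hadj, hw⟩
      rw [hG'] at hadj
      rcases hdel with ⟨h1, h2⟩ | ⟨h1, h2⟩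
      · exact hadj.2 (Or.inl ⟨hx.trans h1, hw.trans h2⟩)
      · exact hadj.2 (Or.inr ⟨hx.trans h1, hw.trans h2⟩)
    rw [empty u rfl, empty v huv.symm]
  · -- sets coincide with the G-sets
    have same : ∀ x : V, c x = c u →
        {w : V | G'.Adj x w ∧ c w = k} = {w : V | G.Adj x w ∧ c w = k} := by
      intro x hx
      ext w
      simp only [Set.mem_setOf_eq, hG']
      constructor
      · rintro ⟨⟨h, _⟩, hw⟩; exact ⟨h, hw⟩
      · rintro ⟨h, hw⟩
        refine ⟨⟨h, ?_⟩, hw⟩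
        rintro (⟨h1, h2⟩ | ⟨h1, h2⟩)
        · exact hdel (Or.inl ⟨hx ▸ h1, hw ▸ h2⟩)
        · exact hdel (Or.inr ⟨hx ▸ h1, hw ▸ h2⟩)
    rw [same u rfl, same v huv.symm]
    exact hEq u v huv k
end

section
/- Let G be a simple graph on a finite vertex set V and c : V → ℕ a coloring that is equitable with respect to G. Suppose v ∈ V is such that c⁻¹(c(v)) = {v} (v lies in a singleton color class). Let G' be the graph obtained from G by deleting all edges incident to v. Then a permutation γ of V is a color-preserving automorphism of (G, c) if and only if it is a color-preserving automorphism of (G', c). -/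
/-- For an equitable coloring, deleting all edges incident to a vertex lying in
a singleton color class does not change the color-preserving automorphism
group. -/
theorem stmt_9 {V : Type*} [Fintype V] (G G' : SimpleGraph V) (c : V → ℕ)
    (hEq : ∀ u v : V, c u = c v → ∀ j : ℕ,
      {w : V | G.Adj u w ∧ c w = j}.ncard = {w : V | G.Adj v w ∧ c w = j}.ncard)
    (v : V) (hv : ∀ w : V, c w = c v ↔ w = v)
    (hG' : ∀ u w : V, G'.Adj u w ↔ G.Adj u w ∧ u ≠ v ∧ w ≠ v)
    (γ : Equiv.Perm V) :
    ((∀ u w : V, G.Adj (γ u) (γ w) ↔ G.Adj u w) ∧ (∀ w : V, c (γ w) = c w)) ↔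
      ((∀ u w : V, G'.Adj (γ u) (γ w) ↔ G'.Adj u w) ∧ (∀ w : V, c (γ w) = c w)) := by
  classical
  have hset : ∀ x : V, {y : V | G.Adj x y ∧ c y = c v} =
      if G.Adj x v then {v} else ∅ := by
    intro x
    ext y
    by_cases h : G.Adj x v
    · simp only [Set.mem_setOf_eq, if_pos h, Set.mem_singleton_iff, hv y]
      constructor
      · rintro ⟨_, h2⟩; exact h2
      · rintro rfl; exact ⟨h, rfl⟩
    · simp only [Set.mem_setOf_eq, if_neg h, Set.mem_empty_iff_false, iff_false]
      rintro ⟨h1, h2⟩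
      exact h ((hv y).mp h2 ▸ h1)
  have key : ∀ u w : V, c u = c w → (G.Adj u v ↔ G.Adj w v) := by
    intro u w hc'
    have h := hEq u w hc' (c v)
    rw [hset u, hset w] at h
    by_cases hu : G.Adj u v <;> by_cases hw : G.Adj w v <;>
      simp [hu, hw] at h ⊢
  constructor
  · rintro ⟨hA, hc⟩
    refine ⟨?_, hc⟩
    have hfix : γ v = v := (hv (γ v)).mp (hc v)
    have hiff : ∀ x : V, γ x = v ↔ x = v :=
      fun x => ⟨fun h => γ.injective (h.trans hfix.symm), fun h => h ▸ hfix⟩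
    intro u w
    rw [hG', hG']
    simp [hA, hiff]
  · rintro ⟨hA', hc⟩
    refine ⟨?_, hc⟩
    have hfix : γ v = v := (hv (γ v)).mp (hc v)
    have hiff : ∀ x : V, γ x = v ↔ x = v :=
      fun x => ⟨fun h => γ.injective (h.trans hfix.symm), fun h => h ▸ hfix⟩
    have adjv : ∀ w : V, G.Adj (γ w) v ↔ G.Adj w v := fun w => key (γ w) w (hc w)
    intro u w
    by_cases hu : u = v
    · rw [hu, hfix, G.adj_comm, adjv w, G.adj_comm]
    · by_cases hw : w = v
      · rw [hw, hfix, adjv u]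
      · have h := hA' u w
        rw [hG', hG'] at h
        simpa [hu, hw, hiff] using h
end
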